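/- The map sending a rooted Cayley tree t on vertices labeled {0,1,...,n} (rooted at 0) to the vector (r(1,t),...,r(n,t)), where r(i,t) is the breadth-first-search rank of the parent of the vertex labeled i (with children ordered by increasing label), is a bijection onto the set of parking functions of size n. -/

import Mathlib

open Finset

lemma lex_cons_iff' {α : Type*} (r : α → α → Prop) (x y : α) (p q : List α) :
    List.Lex r (x :: p) (y :: q) ↔ r x y ∨ (x = y ∧ List.Lex r p q) := by
  constructor
  · intro h
    cases h with
    | rel h => exact Or.inl h
    | cons h => exact Or.inr ⟨rfl, h⟩
  · rintro (h | ⟨rfl, h⟩)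
    · exact List.Lex.rel h
    · exact List.Lex.cons h

lemma lex_concat_concat {α : Type*} (r : α → α → Prop) {p q : List α}
    (h : p.length = q.length) (a b : α) :
    List.Lex r (p ++ [a]) (q ++ [b]) ↔ List.Lex r p q ∨ (p = q ∧ r a b) := by
  induction p generalizing q with
  | nil =>
    cases q with
    | nil => simp [lex_cons_iff']
    | cons y q => simp at h
  | cons x p ih =>
    cases q with
    | nil => simp at h
    | cons y q =>
      simp only [List.length_cons, Nat.add_right_cancel_iff] at h
      simp only [List.cons_append, lex_cons_iff', ih h, List.cons.injEq]
      tauto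

lemma list_lex_trichotomy {α : Type*} [LinearOrder α] [DecidableEq α] (l l' : List α) :
    List.Lex (· < ·) l l' ∨ l = l' ∨ List.Lex (· < ·) l' l :=
  trichotomous_of _ l l'


/-- A rooted Cayley tree on the vertices `{0, 1, …, n}`, rooted at `0`, encoded by its
parent function: every vertex eventually reaches the root by iterating the parent map. -/
structure CayleyTree (n : ℕ) where
  par : Fin (n + 1) → Fin (n + 1)
  par_root : par 0 = 0
  reach : ∀ v, ∃ m, par^[m] v = 0

namespace CayleyTree

variable {n : ℕ} (t : CayleyTree n)

/-- The depth of a vertex: the least `m` with `par^[m] v = 0`. -/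
noncomputable def depth (v : Fin (n + 1)) : ℕ := sInf {m | t.par^[m] v = 0}

/-- The path from the root to `v` (the list of labels of the ancestors of `v`,
starting at the root and ending at `v`). -/
noncomputable def path (v : Fin (n + 1)) : List (Fin (n + 1)) :=
  (List.range (t.depth v + 1)).map fun j => t.par^[t.depth v - j] v

/-- The rank of a vertex for the breadth first search in which the children of each
vertex are ordered by increasing label: vertices are visited by increasing depth, and,
within a level, in lexicographic order of their root-to-vertex paths (the root has
rank `1`). -/
noncomputable def bfsRank (v : Fin (n + 1)) : ℕ :=
  1 + Nat.card {u : Fin (n + 1) //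
    t.depth u < t.depth v ∨ (t.depth u = t.depth v ∧ List.Lex (· < ·) (t.path u) (t.path v))}

lemma depth_spec (v : Fin (n + 1)) : t.par^[t.depth v] v = 0 := Nat.sInf_mem (t.reach v)

lemma depth_zero : t.depth 0 = 0 :=
  Nat.eq_zero_of_le_zero (Nat.sInf_le (by simp [Set.mem_setOf_eq]))

lemma depth_eq_zero_iff {v : Fin (n + 1)} : t.depth v = 0 ↔ v = 0 := by
  constructor
  · intro h
    have := t.depth_spec v
    rwa [h, Function.iterate_zero_apply] at this
  · rintro rfl; exact t.depth_zero

lemma depth_par {v : Fin (n + 1)} (hv : v ≠ 0) : t.depth v = t.depth (t.par v) + 1 := by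
  have h0 : t.depth v ≠ 0 := fun h => hv (t.depth_eq_zero_iff.mp h)
  have hle : t.depth v ≤ t.depth (t.par v) + 1 := by
    apply Nat.sInf_le
    simp only [Set.mem_setOf_eq, Function.iterate_succ_apply]
    exact t.depth_spec (t.par v)
  have hge : t.depth (t.par v) ≤ t.depth v - 1 := by
    apply Nat.sInf_le
    simp only [Set.mem_setOf_eq]
    have := t.depth_spec v
    rwa [show t.depth v = (t.depth v - 1) + 1 by omega, Function.iterate_succ_apply] at this
  omega

lemma path_length (v : Fin (n + 1)) : (t.path v).length = t.depth v + 1 := by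
  simp [path]

lemma path_concat (v : Fin (n + 1)) :
    t.path v = ((List.range (t.depth v)).map fun j => t.par^[t.depth v - j] v) ++ [v] := by
  rw [path, List.range_succ, List.map_append]
  simp

lemma eq_of_path_eq {u v : Fin (n + 1)} (h : t.path u = t.path v) : u = v := by
  rw [t.path_concat u, t.path_concat v] at h
  have := (List.append_inj' h (by simp)).2
  simpa using this

lemma path_zero : t.path 0 = [0] := by
  rw [path, t.depth_zero]
  simp

lemma path_succ {v : Fin (n + 1)} (hv : v ≠ 0) :
    t.path v = t.path (t.par v) ++ [v] := by
  rw [t.path_concat v, t.depth_par hv]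
  congr 1
  rw [path]
  apply List.map_congr_left
  intro j hj
  rw [List.mem_range] at hj
  rw [show t.depth (t.par v) + 1 - j = (t.depth (t.par v) - j) + 1 by omega,
    Function.iterate_succ_apply]


/-- Strict BFS order. -/
def lt (u v : Fin (n + 1)) : Prop :=
  t.depth u < t.depth v ∨ (t.depth u = t.depth v ∧ List.Lex (· < ·) (t.path u) (t.path v))

noncomputable def rk (v : Fin (n + 1)) : ℕ := Nat.card {u : Fin (n + 1) // t.lt u v}

lemma bfsRank_eq (v : Fin (n + 1)) : t.bfsRank v = 1 + t.rk v := rfl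

lemma lt_irrefl (v : Fin (n + 1)) : ¬ t.lt v v := by
  rintro (h | ⟨-, h⟩)
  · omega
  · exact irrefl_of _ _ h

lemma lt_trans {u v w : Fin (n + 1)} (h1 : t.lt u v) (h2 : t.lt v w) : t.lt u w := by
  rcases h1 with h1 | ⟨e1, h1⟩ <;> rcases h2 with h2 | ⟨e2, h2⟩
  · exact Or.inl (h1.trans h2)
  · exact Or.inl (e2 ▸ h1)
  · exact Or.inl (e1 ▸ h2)
  · exact Or.inr ⟨e1.trans e2, List.lex_trans (fun h h' => h.trans h') h1 h2⟩

lemma lt_trichotomy (u v : Fin (n + 1)) : t.lt u v ∨ u = v ∨ t.lt v u := by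
  rcases Nat.lt_trichotomy (t.depth u) (t.depth v) with h | h | h
  · exact Or.inl (Or.inl h)
  · rcases list_lex_trichotomy (t.path u) (t.path v) with hl | hl | hl
    · exact Or.inl (Or.inr ⟨h, hl⟩)
    · exact Or.inr (Or.inl (t.eq_of_path_eq hl))
    · exact Or.inr (Or.inr (Or.inr ⟨h.symm, hl⟩))
  · exact Or.inr (Or.inr (Or.inl h))

lemma lt_zero {v : Fin (n + 1)} (hv : v ≠ 0) : t.lt 0 v := by
  refine Or.inl ?_
  rw [t.depth_zero]
  have h1 : t.depth v ≠ 0 := fun h => hv (t.depth_eq_zero_iff.mp h)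
  omega

lemma not_lt_zero (v : Fin (n + 1)) : ¬ t.lt v 0 := by
  rintro (h | ⟨e, h⟩)
  · rw [t.depth_zero] at h; omega
  · rw [t.depth_zero] at e
    rw [t.depth_eq_zero_iff.mp e] at h
    exact irrefl_of _ _ h

lemma lt_par {v : Fin (n + 1)} (hv : v ≠ 0) : t.lt (t.par v) v :=
  Or.inl (by rw [t.depth_par hv]; omega)

lemma par_eq_iff_path_eq {u v : Fin (n + 1)} :
    t.par u = t.par v ↔ t.path (t.par u) = t.path (t.par v) :=
  ⟨fun h => by rw [h], fun h => t.eq_of_path_eq h⟩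

lemma lt_succ_iff {u v : Fin (n + 1)} (hu : u ≠ 0) (hv : v ≠ 0) :
    t.lt u v ↔ t.lt (t.par u) (t.par v) ∨ (t.par u = t.par v ∧ u < v) := by
  have hdu : t.depth u = t.depth (t.par u) + 1 := t.depth_par hu
  have hdv : t.depth v = t.depth (t.par v) + 1 := t.depth_par hv
  rcases Nat.lt_trichotomy (t.depth (t.par u)) (t.depth (t.par v)) with h | h | h
  · constructor
    · intro _; exact Or.inl (Or.inl h)
    · intro _; exact Or.inl (by omega)
  · have hlen : (t.path (t.par u)).length = (t.path (t.par v)).length := by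
      rw [t.path_length, t.path_length, h]
    have hlex : List.Lex (· < ·) (t.path u) (t.path v) ↔
        List.Lex (· < ·) (t.path (t.par u)) (t.path (t.par v)) ∨
          (t.path (t.par u) = t.path (t.par v) ∧ u < v) := by
      rw [t.path_succ hu, t.path_succ hv, lex_concat_concat _ hlen]
    constructor
    · rintro (hd | ⟨-, hl⟩)
      · omega
      · rcases hlex.mp hl with h' | ⟨h', h''⟩
        · exact Or.inl (Or.inr ⟨h, h'⟩)
        · exact Or.inr ⟨t.eq_of_path_eq h', h''⟩
    · rintro ((hd | ⟨-, hl⟩) | ⟨hp, hl⟩)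
      · omega
      · exact Or.inr ⟨by omega, hlex.mpr (Or.inl hl)⟩
      · exact Or.inr ⟨by omega, hlex.mpr (Or.inr ⟨t.par_eq_iff_path_eq.mp hp, hl⟩)⟩
  · constructor
    · rintro (hd | ⟨hd, -⟩) <;> omega
    · rintro ((hd | ⟨hd, -⟩) | ⟨hp, -⟩)
      · omega
      · omega
      · rw [hp] at h; omega

open Classical in
lemma rk_eq_card (v : Fin (n + 1)) : t.rk v = (univ.filter fun u => t.lt u v).card := by
  rw [rk, Nat.card_eq_fintype_card, Fintype.card_subtype]

lemma rk_lt_rk {u v : Fin (n + 1)} (h : t.lt u v) : t.rk u < t.rk v := by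
  classical
  rw [t.rk_eq_card, t.rk_eq_card]
  apply Finset.card_lt_card
  constructor
  · intro x hx
    simp only [mem_filter, mem_univ, true_and] at hx ⊢
    exact t.lt_trans hx h
  · intro hsub
    have := hsub (by simp only [mem_filter, mem_univ, true_and]; exact h)
    simp only [mem_filter, mem_univ, true_and] at this
    exact t.lt_irrefl u this

lemma rk_lt_iff {u v : Fin (n + 1)} : t.rk u < t.rk v ↔ t.lt u v := by
  refine ⟨fun h => ?_, t.rk_lt_rk⟩
  rcases t.lt_trichotomy u v with h' | rfl | h'
  · exact h'
  · omega
  · exact absurd (t.rk_lt_rk h') (by omega)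

lemma rk_injective : Function.Injective t.rk := by
  intro u v h
  rcases t.lt_trichotomy u v with h' | h' | h'
  · exact absurd (t.rk_lt_rk h') (by omega)
  · exact h'
  · exact absurd (t.rk_lt_rk h') (by omega)

lemma rk_le (v : Fin (n + 1)) : t.rk v ≤ n := by
  classical
  rw [t.rk_eq_card]
  calc (univ.filter fun u => t.lt u v).card ≤ (univ.erase v).card := by
        apply Finset.card_le_card
        intro x hx
        simp only [mem_filter, mem_univ, true_and] at hx
        apply Finset.mem_erase_of_ne_of_mem _ (mem_univ x)
        rintro rfl
        exact t.lt_irrefl _ hx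
    _ = n := by simp [Finset.card_erase_of_mem]

lemma rk_zero : t.rk 0 = 0 := by
  classical
  rw [t.rk_eq_card]
  convert Finset.card_empty
  rw [Finset.filter_eq_empty_iff]
  exact fun {x} _ => t.not_lt_zero x

lemma rk_succ_iff {u v : Fin (n + 1)} (hu : u ≠ 0) (hv : v ≠ 0) :
    t.rk u < t.rk v ↔ t.rk (t.par u) < t.rk (t.par v) ∨ (t.par u = t.par v ∧ u < v) := by
  rw [t.rk_lt_iff, t.rk_lt_iff, t.lt_succ_iff hu hv]

end CayleyTree

section Counting

variable {n : ℕ}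

lemma image_eq_range {g : Fin (n + 1) → ℕ} (hinj : Function.Injective g)
    (hle : ∀ v, g v ≤ n) : univ.image g = Finset.range (n + 1) := by
  apply Finset.eq_of_subset_of_card_le
  · intro x hx
    simp only [mem_image, mem_univ, true_and] at hx
    obtain ⟨v, rfl⟩ := hx
    simp only [Finset.mem_range]
    exact Nat.lt_succ_of_le (hle v)
  · rw [Finset.card_range, Finset.card_image_of_injective _ hinj, Finset.card_univ,
      Fintype.card_fin]

lemma card_filter_mem {g : Fin (n + 1) → ℕ} (hinj : Function.Injective g)
    (hle : ∀ v, g v ≤ n) (s : Finset ℕ) (hs : s ⊆ Finset.range (n + 1)) :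
    (univ.filter fun v => g v ∈ s).card = s.card := by
  classical
  have him : (univ.image g).filter (· ∈ s) = (univ.filter fun v => g v ∈ s).image g :=
    Finset.filter_image
  rw [← Finset.card_image_of_injective (univ.filter fun v => g v ∈ s) hinj, ← him,
    image_eq_range hinj hle, Finset.filter_mem_eq_inter, Finset.inter_eq_right.mpr hs]

lemma count_lt_eq {g : Fin (n + 1) → ℕ} (hinj : Function.Injective g)
    (hle : ∀ v, g v ≤ n) (w : Fin (n + 1)) :
    (univ.filter fun u => g u < g w).card = g w := by
  classical
  have h := card_filter_mem hinj hle (Finset.range (g w))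
    (by intro x hx; simp only [Finset.mem_range] at hx ⊢; have := hle w; omega)
  rw [Finset.card_range] at h
  have he : (univ.filter fun u => g u < g w) = (univ.filter fun v => g v ∈ Finset.range (g w)) := by
    ext u; simp [Finset.mem_range]
  rw [he, h]

end Counting

namespace CayleyTree

variable {n : ℕ}

lemma rk_eq_unique (t : CayleyTree n) {ρ : Fin (n + 1) → ℕ}
    (hinj : Function.Injective ρ) (h0 : ρ 0 = 0) (hle : ∀ v, ρ v ≤ n)
    (hiff : ∀ u v : Fin (n + 1), u ≠ 0 → v ≠ 0 →
      (ρ u < ρ v ↔ ρ (t.par u) < ρ (t.par v) ∨ (t.par u = t.par v ∧ u < v))) :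
    ρ = t.rk := by
  classical
  have key : ∀ N : ℕ, ∀ u v : Fin (n + 1), t.depth u + t.depth v ≤ N →
      (ρ u < ρ v ↔ t.rk u < t.rk v) := by
    intro N
    induction N with
    | zero =>
      intro u v h
      have hu : u = 0 := t.depth_eq_zero_iff.mp (by omega)
      have hv : v = 0 := t.depth_eq_zero_iff.mp (by omega)
      subst hu; subst hv
      omega
    | succ N ih =>
      intro u v h
      by_cases hu : u = 0
      · by_cases hv : v = 0
        · subst hu; subst hv; omega
        · subst hu
          have h1 : ρ v ≠ 0 := fun hc => hv (hinj (hc.trans h0.symm))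
          have h2 : t.rk 0 < t.rk v := t.rk_lt_rk (t.lt_zero hv)
          rw [h0]
          omega
      · by_cases hv : v = 0
        · subst hv
          rw [h0, t.rk_zero]
          omega
        · have hdu : t.depth u = t.depth (t.par u) + 1 := t.depth_par hu
          have hdv : t.depth v = t.depth (t.par v) + 1 := t.depth_par hv
          have ihp := ih (t.par u) (t.par v) (by omega)
          rw [hiff u v hu hv, t.rk_succ_iff hu hv, ihp]
  have keyall : ∀ u v : Fin (n + 1), (ρ u < ρ v ↔ t.rk u < t.rk v) := fun u v =>
    key _ u v le_rfl
  funext v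
  have h1 : (univ.filter fun u => ρ u < ρ v).card = ρ v := count_lt_eq hinj hle v
  have h2 : (univ.filter fun u => t.rk u < t.rk v).card = t.rk v :=
    count_lt_eq t.rk_injective t.rk_le v
  rw [← h1, ← h2]
  congr 1
  exact Finset.filter_congr fun u _ => by rw [keyall u v]

end CayleyTree



/-- `f : Fin n → ℕ` is a parking function of size `n` with values in `{1,…,n}`:
for each `a ∈ {1,…,n}`, at least `a` of its values are `≤ a` (equivalently, its
nondecreasing rearrangement `f'` satisfies `f' i ≤ i`). -/
def IsParkingFun (n : ℕ) (f : Fin n → ℕ) : Prop :=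
  (∀ j, f j ∈ Finset.Icc 1 n) ∧
    ∀ a ∈ Finset.Icc 1 n, a ≤ (Finset.univ.filter fun j => f j ≤ a).card

theorem exists_tree {n : ℕ} (hn : 1 ≤ n) (f : Fin n → ℕ) (hf : IsParkingFun n f) :
    ∃ t : CayleyTree n, (fun i : Fin n => t.bfsRank (t.par i.succ)) = f := by
  classical
  obtain ⟨hf1, hf2⟩ := hf
  have hbound : ∀ i, 1 ≤ f i ∧ f i ≤ n := fun i => by
    have := hf1 i; rw [Finset.mem_Icc] at this; exact this
  set σ : Equiv.Perm (Fin n) := Tuple.sort f with hσdef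
  obtain ⟨hmono, hstab⟩ := (Tuple.eq_sort_iff (f := f) (σ := σ)).mp hσdef
  -- order characterization of σ
  have hlt : ∀ k l : Fin n, k < l ↔
      (f (σ k) < f (σ l) ∨ (f (σ k) = f (σ l) ∧ σ k < σ l)) := by
    intro k l
    constructor
    · intro hkl
      rcases (hmono hkl.le).lt_or_eq with h | h
      · exact Or.inl h
      · exact Or.inr ⟨h, hstab k l hkl h⟩
    · intro h
      rcases lt_trichotomy k l with h' | rfl | h'
      · exact h'
      · rcases h with h | ⟨-, h⟩ <;> exact absurd h (lt_irrefl _)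
      · exfalso
        rcases (hmono h'.le).lt_or_eq with h2 | h2 <;>
          simp only [Function.comp_apply] at h2
        · rcases h with h | ⟨h, -⟩ <;> omega
        · have h3 := hstab l k h' h2
          rcases h with h | ⟨-, h⟩
          · omega
          · exact absurd (h3.trans h) (lt_irrefl _)
  set τ : Fin n → Fin n := fun i => σ.symm i with hτdef
  have hτlt : ∀ i j : Fin n, (τ i < τ j ↔ (f i < f j ∨ (f i = f j ∧ i < j))) := by
    intro i j
    have := hlt (τ i) (τ j)
    simpa [hτdef, σ.apply_symm_apply] using this
  have hτinj : Function.Injective τ := fun i j h => by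
    have := congrArg σ h
    simpa [hτdef, σ.apply_symm_apply] using this
  -- parking inequality
  have hτge : ∀ i, f i - 1 ≤ (τ i : ℕ) := by
    intro i
    by_cases h1 : f i ≤ 1
    · omega
    · have ha : f i - 1 ∈ Finset.Icc 1 n := by
        rw [Finset.mem_Icc]
        have := (hbound i).2
        omega
      have hcard := hf2 (f i - 1) ha
      have hinj2 : (Finset.univ.filter fun j => f j ≤ f i - 1).card ≤
          (Finset.range (τ i : ℕ)).card := by
        apply Finset.card_le_card_of_injOn (fun j => ((τ j : ℕ)))
        · intro j hj
          simp only [Finset.mem_coe, Finset.mem_filter, Finset.mem_univ, true_and] at hj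
          rw [Finset.mem_coe, Finset.mem_range]
          have : τ j < τ i := (hτlt j i).mpr (Or.inl (by omega))
          exact this
        · intro a _ b _ hab
          exact hτinj (Fin.val_injective hab)
      rw [Finset.card_range] at hinj2
      omega
  -- parent map
  have hsub : ∀ i : Fin n, 2 ≤ f i → f i - 2 < n := fun i h2 => by
    have := (hbound i).2; omega
  set P : Fin (n + 1) → Fin (n + 1) :=
    Fin.cases 0 (fun i => if h : 2 ≤ f i then (σ ⟨f i - 2, hsub i h⟩).succ else 0) with hP
  set ρ : Fin (n + 1) → ℕ := Fin.cases 0 (fun i => (τ i : ℕ) + 1) with hρ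
  have hρ0 : ρ 0 = 0 := rfl
  have hρs : ∀ i : Fin n, ρ i.succ = (τ i : ℕ) + 1 := fun i => by
    simp only [hρ, Fin.cases_succ]
  have hP0 : P 0 = 0 := rfl
  have hPs : ∀ i : Fin n, ρ (P i.succ) = f i - 1 := by
    intro i
    by_cases h2 : 2 ≤ f i
    · have : P i.succ = (σ ⟨f i - 2, hsub i h2⟩).succ := by
        simp only [hP, Fin.cases_succ, dif_pos h2]
      rw [this, hρs, hτdef]
      simp only [Equiv.symm_apply_apply]
      omega
    · have h1 : f i = 1 := by have := (hbound i).1; omega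
      have : P i.succ = 0 := by
        simp only [hP, Fin.cases_succ, dif_neg h2]
      rw [this, hρ0, h1]
  have hdec : ∀ v : Fin (n + 1), v ≠ 0 → ρ (P v) < ρ v := by
    intro v hv
    induction v using Fin.cases with
    | zero => exact absurd rfl hv
    | succ i =>
      rw [hPs i, hρs i]
      have := hτge i
      omega
  have hρzero : ∀ v : Fin (n + 1), ρ v = 0 → v = 0 := by
    intro v
    induction v using Fin.cases with
    | zero => intro _; rfl
    | succ i => rw [hρs]; omega
  have hreach : ∀ v : Fin (n + 1), ∃ m, P^[m] v = 0 := by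
    have : ∀ N : ℕ, ∀ v : Fin (n + 1), ρ v ≤ N → ∃ m, P^[m] v = 0 := by
      intro N
      induction N with
      | zero =>
        intro v hv
        exact ⟨0, hρzero v (by omega)⟩
      | succ N ih =>
        intro v hv
        by_cases hv0 : v = 0
        · exact ⟨0, hv0⟩
        · obtain ⟨m, hm⟩ := ih (P v) (by have := hdec v hv0; omega)
          exact ⟨m + 1, by rw [Function.iterate_succ_apply, hm]⟩
    exact fun v => this (ρ v) v le_rfl
  set t : CayleyTree n := ⟨P, hP0, hreach⟩ with ht
  -- ρ is the rank function of t
  have hρinj : Function.Injective ρ := by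
    intro u v h
    induction u using Fin.cases with
    | zero =>
      induction v using Fin.cases with
      | zero => rfl
      | succ j => rw [hρ0, hρs] at h; omega
    | succ i =>
      induction v using Fin.cases with
      | zero => rw [hρ0, hρs] at h; omega
      | succ j =>
        rw [hρs, hρs] at h
        have : τ i = τ j := Fin.val_injective (by omega)
        rw [hτinj this]
  have hρle : ∀ v, ρ v ≤ n := by
    intro v
    induction v using Fin.cases with
    | zero => rw [hρ0]; omega
    | succ i => rw [hρs]; have := (τ i).isLt; omega
  have hPeq : ∀ i j : Fin n, (P i.succ = P j.succ ↔ f i = f j) := by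
    intro i j
    constructor
    · intro h
      by_cases h2i : 2 ≤ f i <;> by_cases h2j : 2 ≤ f j
      · simp only [hP, Fin.cases_succ, dif_pos h2i, dif_pos h2j] at h
        have h3 : f i - 2 = f j - 2 :=
          congrArg Fin.val (σ.injective (Fin.succ_injective _ h))
        omega
      · simp only [hP, Fin.cases_succ, dif_pos h2i, dif_neg h2j] at h
        exact absurd h (Fin.succ_ne_zero _)
      · simp only [hP, Fin.cases_succ, dif_neg h2i, dif_pos h2j] at h
        exact absurd h.symm (Fin.succ_ne_zero _)
      · have hi1 := (hbound i).1
        have hj1 := (hbound j).1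
        omega
    · intro h
      by_cases h2i : 2 ≤ f i
      · have h2j : 2 ≤ f j := by omega
        simp only [hP, Fin.cases_succ, dif_pos h2i, dif_pos h2j]
        have he : (⟨f i - 2, hsub i h2i⟩ : Fin n) = ⟨f j - 2, hsub j h2j⟩ := by
          rw [Fin.mk.injEq]; omega
        rw [he]
      · have h2j : ¬ 2 ≤ f j := by omega
        simp only [hP, Fin.cases_succ, dif_neg h2i, dif_neg h2j]
  have hiff : ∀ u v : Fin (n + 1), u ≠ 0 → v ≠ 0 →
      (ρ u < ρ v ↔ ρ (t.par u) < ρ (t.par v) ∨ (t.par u = t.par v ∧ u < v)) := by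
    intro u v hu hv
    induction u using Fin.cases with
    | zero => exact absurd rfl hu
    | succ i =>
      induction v using Fin.cases with
      | zero => exact absurd rfl hv
      | succ j =>
        have htpar : t.par = P := rfl
        rw [htpar, hρs, hρs, hPs, hPs, hPeq, Fin.succ_lt_succ_iff]
        have h1i := (hbound i).1
        have h1j := (hbound j).1
        have hτ' := hτlt i j
        rw [Fin.lt_def] at hτ'
        constructor
        · intro hlt'
          rcases hτ'.mp (by omega) with h | ⟨h, h'⟩
          · exact Or.inl (by omega)
          · exact Or.inr ⟨h, h'⟩
        · rintro (h | ⟨h, h'⟩)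
          · have := hτ'.mpr (Or.inl (by omega)); omega
          · have := hτ'.mpr (Or.inr ⟨h, h'⟩); omega
  have hρrk : ρ = t.rk := t.rk_eq_unique hρinj hρ0 hρle hiff
  refine ⟨t, ?_⟩
  funext i
  have htpar : t.par = P := rfl
  rw [t.bfsRank_eq, htpar, ← hρrk, hPs i]
  have := (hbound i).1
  omega

lemma CayleyTree.ext' {n : ℕ} {t t' : CayleyTree n} (h : t.par = t'.par) : t = t' := by
  cases t; cases t'
  simp only at h
  subst h
  rfl


/-- Chassaing–Marckert bijection: the map sending a rooted Cayley tree `t` on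
`{0,…,n}` to `(r(1,t),…,r(n,t))`, where `r(i,t)` is the breadth-first-search rank of
the parent of the vertex labeled `i`, is a bijection onto the set of parking functions
of size `n`. -/
theorem cayleyTree_bfs_parking_bijection (n : ℕ) (hn : 1 ≤ n) :
    Set.BijOn (fun (t : CayleyTree n) => fun i : Fin n => t.bfsRank (t.par i.succ))
      Set.univ {f : Fin n → ℕ | IsParkingFun n f} := by
  classical
  refine ⟨fun t _ => ⟨fun i => ?_, fun a ha => ?_⟩, fun t _ t' _ h => ?_, fun f hf => ?_⟩
  -- MapsTo, part 1: values in Icc 1 n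
  · show t.bfsRank (t.par i.succ) ∈ Finset.Icc 1 n
    rw [Finset.mem_Icc, t.bfsRank_eq]
    have h1 : t.rk (t.par i.succ) < t.rk i.succ := t.rk_lt_rk (t.lt_par (Fin.succ_ne_zero i))
    have h2 : t.rk i.succ ≤ n := t.rk_le _
    omega
  -- MapsTo, part 2: parking count
  · show a ≤ (univ.filter fun j : Fin n => t.bfsRank (t.par j.succ) ≤ a).card
    rw [Finset.mem_Icc] at ha
    set B : Finset (Fin (n + 1)) := univ.filter fun v => t.rk v ∈ Finset.Icc 1 a with hB
    have hBcard : B.card = a := by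
      rw [hB, card_filter_mem t.rk_injective t.rk_le]
      · simp [Nat.card_Icc]
      · intro x hx
        rw [Finset.mem_Icc] at hx
        rw [Finset.mem_range]
        omega
    have hle : B.card ≤ (univ.filter fun j : Fin n =>
        t.bfsRank (t.par j.succ) ≤ a).card := by
      apply Finset.card_le_card_of_injOn
        (fun v => if h : v = 0 then ⟨0, hn⟩ else v.pred h)
      · intro v hv
        rw [hB, Finset.mem_coe, Finset.mem_filter, Finset.mem_Icc] at hv
        have hv0 : v ≠ 0 := by
          rintro rfl
          rw [t.rk_zero] at hv
          omega
        rw [Finset.mem_coe]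
        beta_reduce
        rw [dif_neg hv0]
        rw [Finset.mem_filter]
        refine ⟨Finset.mem_univ _, ?_⟩
        rw [t.bfsRank_eq, Fin.succ_pred]
        have := t.rk_lt_rk (t.lt_par hv0)
        omega
      · intro v hv w hw hvw
        have hB0 : (0 : Fin (n + 1)) ∉ B := by
          rw [hB]
          simp [t.rk_zero]
        have hv0 : v ≠ 0 := fun h => hB0 (h ▸ Finset.mem_coe.mp hv)
        have hw0 : w ≠ 0 := fun h => hB0 (h ▸ Finset.mem_coe.mp hw)
        simp only [dif_neg hv0, dif_neg hw0] at hvw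
        have := congrArg Fin.succ hvw
        rwa [Fin.succ_pred, Fin.succ_pred] at this
    omega
  -- InjOn
  · have hpar : ∀ v : Fin (n + 1), v ≠ 0 → t.rk (t.par v) = t'.rk (t'.par v) := by
      intro v hv
      have := congrFun h (v.pred hv)
      simp only [t.bfsRank_eq, t'.bfsRank_eq, Fin.succ_pred] at this
      omega
    have hkey : ∀ u v : Fin (n + 1), (t.rk u < t.rk v ↔ t'.rk u < t'.rk v) := by
      intro u v
      by_cases hu : u = 0
      · by_cases hv : v = 0
        · subst hu; subst hv; omega
        · subst hu
          have h1 := t.rk_lt_rk (t.lt_zero hv)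
          have h2 := t'.rk_lt_rk (t'.lt_zero hv)
          omega
      · by_cases hv : v = 0
        · subst hv
          rw [t.rk_zero, t'.rk_zero]
          omega
        · rw [t.rk_succ_iff hu hv, t'.rk_succ_iff hu hv, hpar u hu, hpar v hv]
          have hpp : t.par u = t.par v ↔ t'.par u = t'.par v := by
            constructor
            · intro hh
              apply t'.rk_injective
              rw [← hpar u hu, ← hpar v hv, hh]
            · intro hh
              apply t.rk_injective
              rw [hpar u hu, hpar v hv, hh]
          rw [hpp]
    have hrk : t.rk = t'.rk := by
      funext v
      have h1 := count_lt_eq t.rk_injective t.rk_le v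
      have h2 := count_lt_eq t'.rk_injective t'.rk_le v
      rw [← h1, ← h2]
      congr 1
      exact Finset.filter_congr fun u _ => by rw [hkey u v]
    apply CayleyTree.ext'
    funext v
    by_cases hv : v = 0
    · subst hv; rw [t.par_root, t'.par_root]
    · apply t.rk_injective
      rw [hpar v hv, ← hrk]
  -- SurjOn
  · obtain ⟨t, ht⟩ := exists_tree hn f hf
    exact ⟨t, Set.mem_univ t, ht⟩
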